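/- Let (A, μ, Δ, α, c) be a Hom-bialgebra with weak unit c over a field of characteristic 0, and let R = Σ sᵢ ⊗ tᵢ ∈ A ⊗ A. Define λ₂ : A* → A by λ₂(φ) = Σ α(sᵢ) φ(tᵢ) and λ₂' : A* → A by λ₂'(φ) = Σ sᵢ φ(α(tᵢ)). Then the axiom (α ⊗ Δ)(R) = R₁₃R₁₂ holds if and only if λ₂ ∘ Δ* = μ ∘ τ ∘ (λ₂' ⊗ λ₂') : A* ⊗ A* → A. -/

import Mathlib

open TensorProduct

variable {k : Type*} [Field k] [CharZero k] {A : Type*} [AddCommGroup A] [Module k A]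

noncomputable def mulT2 (μ : A →ₗ[k] A →ₗ[k] A) (X Y : A ⊗[k] A) : A ⊗[k] A :=
  ((TensorProduct.map (TensorProduct.lift μ) (TensorProduct.lift μ)) ∘ₗ
    (TensorProduct.tensorTensorTensorComm k A A A A).toLinearMap) (X ⊗ₜ[k] Y)

noncomputable def mulT3 (μ : A →ₗ[k] A →ₗ[k] A) (X Y : (A ⊗[k] A) ⊗[k] A) :
    (A ⊗[k] A) ⊗[k] A :=
  ((TensorProduct.map
      ((TensorProduct.map (TensorProduct.lift μ) (TensorProduct.lift μ)) ∘ₗ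
        (TensorProduct.tensorTensorTensorComm k A A A A).toLinearMap)
      (TensorProduct.lift μ)) ∘ₗ
    (TensorProduct.tensorTensorTensorComm k (A ⊗[k] A) A (A ⊗[k] A) A).toLinearMap)
    (X ⊗ₜ[k] Y)

noncomputable def R12e (c : A) (R : A ⊗[k] A) : (A ⊗[k] A) ⊗[k] A := R ⊗ₜ[k] c

noncomputable def R23e (c : A) (R : A ⊗[k] A) : (A ⊗[k] A) ⊗[k] A :=
  (TensorProduct.assoc k A A A).symm (c ⊗ₜ[k] R)

noncomputable def R13e (c : A) (R : A ⊗[k] A) : (A ⊗[k] A) ⊗[k] A :=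
  TensorProduct.map (TensorProduct.comm k A A).toLinearMap LinearMap.id (R23e c R)

/-- The dual multiplication `Δ*` on `A*`: `⟨Δ*(φ, ψ), x⟩ = ⟨φ ⊗ ψ, Δ(x)⟩`. -/
noncomputable def dualMul (Δ : A →ₗ[k] A ⊗[k] A) (φ ψ : Module.Dual k A) :
    Module.Dual k A :=
  LinearMap.mul' k k ∘ₗ TensorProduct.map φ ψ ∘ₗ Δ

/-- `λ₂(φ) = Σ α(sᵢ) φ(tᵢ)` for `R = Σ sᵢ ⊗ tᵢ`. -/
noncomputable def lam2 (α : A →ₗ[k] A) (R : A ⊗[k] A) (φ : Module.Dual k A) : A :=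
  (TensorProduct.rid k A) (TensorProduct.map α φ R)

/-- `λ₂'(φ) = Σ sᵢ φ(α(tᵢ))` for `R = Σ sᵢ ⊗ tᵢ`. -/
noncomputable def lam2' (α : A →ₗ[k] A) (R : A ⊗[k] A) (φ : Module.Dual k A) : A :=
  (TensorProduct.rid k A) (TensorProduct.map LinearMap.id (φ ∘ₗ α) R)

set_option linter.unusedSectionVars false
set_option linter.unusedVariables false


noncomputable def stripR (V : Type*) [AddCommGroup V] [Module k V]
    (φ : Module.Dual k A) : V ⊗[k] A →ₗ[k] V :=
  (TensorProduct.rid k V).toLinearMap ∘ₗ TensorProduct.map LinearMap.id φ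

@[simp] lemma stripR_tmul (V : Type*) [AddCommGroup V] [Module k V]
    (φ : Module.Dual k A) (v : V) (a : A) :
    stripR V φ (v ⊗ₜ[k] a) = φ a • v := by
  simp [stripR]

lemma strip_sep {V : Type*} [AddCommGroup V] [Module k V] (X Y : V ⊗[k] A)
    (h : ∀ φ : Module.Dual k A, stripR V φ X = stripR V φ Y) : X = Y := by
  classical
  let b := Module.Basis.ofVectorSpace k A
  let e : V ⊗[k] A ≃ₗ[k] (_ →₀ V) :=
    (TensorProduct.congr (LinearEquiv.refl k V) b.repr).trans
      (TensorProduct.finsuppScalarRight k k V _)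
  have key : ∀ (Z : V ⊗[k] A) i, e Z i = stripR V (b.coord i) Z := by
    intro Z i
    induction Z using TensorProduct.induction_on with
    | zero => simp
    | tmul v a =>
        simp [e, TensorProduct.finsuppScalarRight_apply_tmul_apply, Module.Basis.coord_apply]
    | add x y hx hy => simp [map_add, hx, hy]
  apply e.injective
  ext i
  rw [key, key]; exact h _

@[simp] lemma lam2_tmul (α : A →ₗ[k] A) (s t : A) (φ : Module.Dual k A) :
    lam2 α (s ⊗ₜ[k] t) φ = φ t • α s := by simp [lam2]

@[simp] lemma lam2_add (α : A →ₗ[k] A) (x y : A ⊗[k] A) (φ : Module.Dual k A) :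
    lam2 α (x + y) φ = lam2 α x φ + lam2 α y φ := by simp [lam2]

@[simp] lemma lam2_zero (α : A →ₗ[k] A) (φ : Module.Dual k A) :
    lam2 α (0 : A ⊗[k] A) φ = 0 := by simp [lam2]

@[simp] lemma lam2'_tmul (α : A →ₗ[k] A) (s t : A) (φ : Module.Dual k A) :
    lam2' α (s ⊗ₜ[k] t) φ = φ (α t) • s := by simp [lam2']

@[simp] lemma lam2'_add (α : A →ₗ[k] A) (x y : A ⊗[k] A) (φ : Module.Dual k A) :
    lam2' α (x + y) φ = lam2' α x φ + lam2' α y φ := by simp [lam2']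

@[simp] lemma lam2'_zero (α : A →ₗ[k] A) (φ : Module.Dual k A) :
    lam2' α (0 : A ⊗[k] A) φ = 0 := by simp [lam2']

@[simp] lemma R13e_tmul (c s t : A) :
    R13e c (s ⊗ₜ[k] t) = (s ⊗ₜ[k] c) ⊗ₜ[k] t := by simp [R13e, R23e]

@[simp] lemma R13e_add (c : A) (x y : A ⊗[k] A) :
    R13e c (x + y) = R13e c x + R13e c y := by simp [R13e, R23e, tmul_add]

@[simp] lemma R13e_zero (c : A) : R13e c (0 : A ⊗[k] A) = 0 := by
  simp [R13e, R23e, tmul_zero]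

@[simp] lemma mulT3_tmul (μ : A →ₗ[k] A →ₗ[k] A) (a b e p q r : A) :
    mulT3 μ ((a ⊗ₜ[k] b) ⊗ₜ[k] e) ((p ⊗ₜ[k] q) ⊗ₜ[k] r)
      = (μ a p ⊗ₜ[k] μ b q) ⊗ₜ[k] μ e r := by
  simp [mulT3]

@[simp] lemma mulT3_add_left (μ : A →ₗ[k] A →ₗ[k] A) (X X' Y : (A ⊗[k] A) ⊗[k] A) :
    mulT3 μ (X + X') Y = mulT3 μ X Y + mulT3 μ X' Y := by
  simp [mulT3, add_tmul]

@[simp] lemma mulT3_add_right (μ : A →ₗ[k] A →ₗ[k] A) (X Y Y' : (A ⊗[k] A) ⊗[k] A) :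
    mulT3 μ X (Y + Y') = mulT3 μ X Y + mulT3 μ X Y' := by
  simp [mulT3, tmul_add]

@[simp] lemma mulT3_zero_left (μ : A →ₗ[k] A →ₗ[k] A) (Y : (A ⊗[k] A) ⊗[k] A) :
    mulT3 μ 0 Y = 0 := by simp [mulT3, zero_tmul]

@[simp] lemma mulT3_zero_right (μ : A →ₗ[k] A →ₗ[k] A) (X : (A ⊗[k] A) ⊗[k] A) :
    mulT3 μ X 0 = 0 := by simp [mulT3, tmul_zero]

lemma aux1 (φ ψ : Module.Dual k A) (v : A) (D : A ⊗[k] A) :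
    stripR A φ (stripR (A ⊗[k] A) ψ ((TensorProduct.assoc k A A A).symm (v ⊗ₜ[k] D)))
      = (LinearMap.mul' k k) (TensorProduct.map φ ψ D) • v := by
  induction D using TensorProduct.induction_on with
  | zero => simp [tmul_zero]
  | tmul u w => simp [smul_smul, mul_comm]
  | add x y hx hy => simp [tmul_add, map_add, hx, hy, add_smul]

lemma comp_left (μ : A →ₗ[k] A →ₗ[k] A) (Δ : A →ₗ[k] A ⊗[k] A) (α : A →ₗ[k] A)
    (R : A ⊗[k] A) (φ ψ : Module.Dual k A) :
    stripR A φ (stripR (A ⊗[k] A) ψ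
      ((TensorProduct.assoc k A A A).symm (TensorProduct.map α Δ R)))
      = lam2 α R (dualMul Δ φ ψ) := by
  induction R using TensorProduct.induction_on with
  | zero => simp
  | tmul s t =>
      rw [TensorProduct.map_tmul, aux1]
      simp [lam2, dualMul]
  | add x y hx hy => simp [map_add, hx, hy]

lemma comp_right (μ : A →ₗ[k] A →ₗ[k] A) (α : A →ₗ[k] A) (c : A)
    (hcl : ∀ x : A, μ c x = α x) (hcr : ∀ x : A, μ x c = α x)
    (R1 R2 : A ⊗[k] A) (φ ψ : Module.Dual k A) :
    stripR A φ (stripR (A ⊗[k] A) ψ (mulT3 μ (R13e c R1) (R12e c R2)))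
      = μ (lam2' α R1 ψ) (lam2' α R2 φ) := by
  induction R1 using TensorProduct.induction_on with
  | zero => simp
  | tmul s' t' =>
      induction R2 using TensorProduct.induction_on with
      | zero => simp [R12e]
      | tmul s t =>
          simp [R12e, hcl, hcr, smul_smul, mul_comm]
      | add x y hx hy =>
          simp only [R12e, add_tmul, R13e_tmul, mulT3_add_right, map_add, lam2'_add] at hx hy ⊢
          rw [hx, hy]
  | add x y hx hy => simp [hx, hy]

/-- The axiom `(α ⊗ Δ)(R) = R₁₃R₁₂` holds if and only if
`λ₂ ∘ Δ* = μ ∘ τ ∘ (λ₂' ⊗ λ₂')`. -/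
theorem second_axiom_iff_lambda_two
    (μ : A →ₗ[k] A →ₗ[k] A) (Δ : A →ₗ[k] A ⊗[k] A) (α : A →ₗ[k] A) (c : A) (R : A ⊗[k] A)
    (hαμ : ∀ x y : A, α (μ x y) = μ (α x) (α y))
    (hassoc : ∀ x y z : A, μ (μ x y) (α z) = μ (α x) (μ y z))
    (hαΔ : Δ ∘ₗ α = TensorProduct.map α α ∘ₗ Δ)
    (hcoassoc : (TensorProduct.assoc k A A A).toLinearMap ∘ₗ TensorProduct.map Δ α ∘ₗ Δ
      = TensorProduct.map α Δ ∘ₗ Δ)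
    (hcompat : ∀ x y : A, Δ (μ x y) = mulT2 μ (Δ x) (Δ y))
    (hcl : ∀ x : A, μ c x = α x) (hcr : ∀ x : A, μ x c = α x) :
    ((TensorProduct.assoc k A A A).symm (TensorProduct.map α Δ R)
        = mulT3 μ (R13e c R) (R12e c R)) ↔
    (∀ φ ψ : Module.Dual k A,
      lam2 α R (dualMul Δ φ ψ) = μ (lam2' α R ψ) (lam2' α R φ)) := by
  constructor
  · intro h φ ψ
    rw [← comp_left μ Δ α R φ ψ, h, comp_right μ α c hcl hcr]
  · intro h
    apply strip_sep
    intro ψ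
    apply strip_sep
    intro φ
    rw [comp_left μ Δ α R φ ψ, comp_right μ α c hcl hcr]
    exact h φ ψ
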